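/- arXiv:2207.10751 — 2 statements merged into one kernel-verified Lean document; each statement's English description precedes it below -/
import Mathlib

section
/- Let $f(w) = \frac{1}{2}\|Bw - c\|^2$ where $B \in \mathbb{R}^{d \times K}$, $c \in \mathbb{R}^d$, restricted to a polyhedron $P \subseteq \mathbb{R}^K$, and suppose the minimum value over $P$ is attained. Then (Hoffman-type error bound / linear regularity for convex quadratics over polyhedra) there exist constants $C > 0$ such that for all $w \in P$: $\mathrm{dist}(w, \arg\min_P f) \leq C\,[f(w) - \min_P f]^{1/2}$. -/
set_option synthInstance.maxHeartbeats 1000000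
set_option maxHeartbeats 1000000

open Finset
open scoped RealInnerProductSpace

section Hoffman

variable {E : Type*} [NormedAddCommGroup E] [InnerProductSpace ℝ E]


lemma exists_proj [CompleteSpace E] {S : Set E} (hne : S.Nonempty) (hcl : IsClosed S)
    (hconv : Convex ℝ S) (x : E) :
    ∃ y ∈ S, ∀ w ∈ S, ⟪x - y, w - y⟫ ≤ 0 := by
  obtain ⟨y, hy, hmin⟩ := exists_norm_eq_iInf_of_complete_convex hne hcl.isComplete hconv x
  exact ⟨y, hy, (norm_eq_iInf_iff_real_inner_le_zero hconv hy).mp hmin⟩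

lemma carath {ι : Type*} [DecidableEq ι] (a : ι → E) :
    ∀ (n : ℕ) (s : Finset ι), s.card = n → ∀ (lam : ι → ℝ), (∀ i ∈ s, 0 ≤ lam i) →
    ∃ t : Finset ι, t ⊆ s ∧ ∃ mu : ι → ℝ, (∀ i ∈ t, 0 ≤ mu i) ∧
      LinearIndependent ℝ (fun i : t => a i) ∧ ∑ i ∈ t, mu i • a i = ∑ i ∈ s, lam i • a i := by
  intro n
  induction n using Nat.strong_induction_on with
  | _ n ih =>
    intro s hcard lam hlam
    by_cases hind : LinearIndependent ℝ (fun i : s => a i)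
    · exact ⟨s, Finset.Subset.refl s, lam, hlam, hind, rfl⟩
    · obtain ⟨g, hg0, i₁, hgi₁⟩ := Fintype.not_linearIndependent_iff.mp hind
      -- extend g to ι
      set c : ι → ℝ := fun i => if h : i ∈ s then g ⟨i, h⟩ else 0 with hc
      have hcsum : ∑ i ∈ s, c i • a i = 0 := by
        rw [← hg0, ← Finset.sum_attach s (fun i => c i • a i)]
        apply Finset.sum_congr rfl
        intro i _
        simp [hc, i.2]
      have hcne : ∃ i ∈ s, c i ≠ 0 := ⟨i₁, i₁.2, by simp [hc, i₁.2, hgi₁]⟩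
      -- WLOG there is a positive entry
      have key : ∀ c : ι → ℝ, (∑ i ∈ s, c i • a i = 0) → (∃ i ∈ s, 0 < c i) →
          ∃ t : Finset ι, t ⊆ s ∧ ∃ mu : ι → ℝ, (∀ i ∈ t, 0 ≤ mu i) ∧
            LinearIndependent ℝ (fun i : t => a i) ∧ ∑ i ∈ t, mu i • a i = ∑ i ∈ s, lam i • a i := by
        intro c hcsum ⟨j, hjs, hjc⟩
        classical
        set T : Finset ι := s.filter (fun i => 0 < c i) with hT
        have hTne : T.Nonempty := ⟨j, by simp [hT, hjs, hjc]⟩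
        obtain ⟨i₀, hi₀T, hi₀min⟩ := Finset.exists_mem_eq_inf' hTne (fun i => lam i / c i)
        have hi₀s : i₀ ∈ s := (Finset.mem_filter.mp hi₀T).1
        have hi₀c : 0 < c i₀ := (Finset.mem_filter.mp hi₀T).2
        set r : ℝ := lam i₀ / c i₀ with hr
        have hr0 : 0 ≤ r := div_nonneg (hlam i₀ hi₀s) hi₀c.le
        have hrmin : ∀ i ∈ s, 0 < c i → r ≤ lam i / c i := by
          intro i his hci
          have h1 : T.inf' hTne (fun i => lam i / c i) ≤ lam i / c i :=
            Finset.inf'_le _ (Finset.mem_filter.mpr ⟨his, hci⟩)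
          rw [hi₀min] at h1
          rw [hr]; linarith
        set lam' : ι → ℝ := fun i => lam i - r * c i with hlam'
        have hlam'0 : ∀ i ∈ s, 0 ≤ lam' i := by
          intro i his
          rcases lt_or_ge 0 (c i) with h | h
          · have := hrmin i his h
            have : r * c i ≤ lam i := by
              rw [div_eq_mul_inv] at this
              calc r * c i ≤ (lam i * (c i)⁻¹) * c i := by nlinarith
                _ = lam i := by field_simp
            simp [hlam']; linarith
          · simp [hlam']
            nlinarith [hlam i his]
        have hlam'i₀ : lam' i₀ = 0 := by
          simp [hlam', hr]; field_simp; ring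
        have hsum' : ∑ i ∈ s.erase i₀, lam' i • a i = ∑ i ∈ s, lam i • a i := by
          have h1 : ∑ i ∈ s, lam' i • a i = ∑ i ∈ s, lam i • a i - r • ∑ i ∈ s, c i • a i := by
            rw [Finset.smul_sum, ← Finset.sum_sub_distrib]
            apply Finset.sum_congr rfl
            intro i _
            simp [hlam', sub_smul, smul_smul]
          rw [← Finset.add_sum_erase s _ hi₀s] at h1
          rw [hlam'i₀] at h1
          simp [hcsum] at h1
          rw [h1]
        have hcard' : (s.erase i₀).card < n := by
          rw [← hcard]
          exact Finset.card_erase_lt_of_mem hi₀s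
        obtain ⟨t, hts, mu, hmu, hind', hsum''⟩ :=
          ih _ hcard' (s.erase i₀) rfl lam' (fun i hi => hlam'0 i (Finset.mem_of_mem_erase hi))
        exact ⟨t, hts.trans (Finset.erase_subset _ _), mu, hmu, hind', by rw [hsum'', hsum']⟩
      rcases hcne with ⟨i₂, hi₂s, hi₂c⟩
      rcases hi₂c.lt_or_gt with h | h
      · refine key (fun i => -c i) ?_ ⟨i₂, hi₂s, by linarith⟩
        have : ∑ i ∈ s, (-c i) • a i = -∑ i ∈ s, c i • a i := by
          rw [← Finset.sum_neg_distrib]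
          exact Finset.sum_congr rfl fun i _ => by rw [neg_smul]
        rw [this, hcsum, neg_zero]
      · exact key c hcsum ⟨i₂, hi₂s, h⟩

lemma indep_bound {ι : Type*} [Fintype ι] (a : ι → E) (hind : LinearIndependent ℝ a) :
    ∃ C > 0, ∀ lam : ι → ℝ, ∑ i, |lam i| ≤ C * ‖∑ i, lam i • a i‖ := by
  classical
  set f : (ι → ℝ) →ₗ[ℝ] E :=
    { toFun := fun lam => ∑ i, lam i • a i
      map_add' := by intro x y; simp [add_smul, Finset.sum_add_distrib]
      map_smul' := by intro r x; simp [smul_smul, Finset.smul_sum] } with hfdef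
  have hinj : Function.Injective f := by
    intro x y hxy
    have : ∑ i, (x - y) i • a i = 0 := by
      simp only [Pi.sub_apply, sub_smul, Finset.sum_sub_distrib]
      have : f x = f y := hxy
      simpa [hfdef] using sub_eq_zero.mpr this
    have := Fintype.linearIndependent_iff.mp hind (x - y) this
    funext i
    have := this i
    simpa [sub_eq_zero] using this
  let e : (ι → ℝ) ≃ₗ[ℝ] LinearMap.range f := LinearEquiv.ofInjective f hinj
  haveI : FiniteDimensional ℝ (LinearMap.range f) := e.finiteDimensional
  let ec := e.toContinuousLinearEquiv
  set N : ℝ := ‖(ec.symm : LinearMap.range f →L[ℝ] (ι → ℝ))‖ with hN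
  refine ⟨(Fintype.card ι) * (N + 1) + 1, by positivity, fun lam => ?_⟩
  have h1 : ‖lam‖ ≤ N * ‖ec lam‖ := by
    have := (ec.symm : LinearMap.range f →L[ℝ] (ι → ℝ)).le_opNorm (ec lam)
    simpa using this
  have h2 : ‖(ec lam : E)‖ = ‖∑ i, lam i • a i‖ := by
    congr 1
  have h3 : ∑ i, |lam i| ≤ (Fintype.card ι) * ‖lam‖ := by
    calc ∑ i, |lam i| ≤ ∑ _i : ι, ‖lam‖ := by
          apply Finset.sum_le_sum
          intro i _
          simpa using norm_le_pi_norm lam i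
      _ = (Fintype.card ι) * ‖lam‖ := by simp [mul_comm]
  have h4 : ‖ec lam‖ = ‖∑ i, lam i • a i‖ := by
    rw [← h2]; rfl
  have hnn : (0:ℝ) ≤ ‖∑ i, lam i • a i‖ := norm_nonneg _
  calc ∑ i, |lam i| ≤ (Fintype.card ι) * ‖lam‖ := h3
    _ ≤ (Fintype.card ι) * (N * ‖∑ i, lam i • a i‖) := by
        apply mul_le_mul_of_nonneg_left _ (by positivity)
        rw [← h4]; exact h1
    _ ≤ ((Fintype.card ι) * (N + 1) + 1) * ‖∑ i, lam i • a i‖ := by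
        have hN0 : 0 ≤ N := hN ▸ ContinuousLinearMap.opNorm_nonneg _
        nlinarith [Nat.cast_nonneg (α := ℝ) (Fintype.card ι)]

def coneOf {ι : Type*} (s : Finset ι) (a : ι → E) : Set E :=
  {x | ∃ lam : ι → ℝ, (∀ i ∈ s, 0 ≤ lam i) ∧ x = ∑ i ∈ s, lam i • a i}

lemma coneOf_zero {ι : Type*} (s : Finset ι) (a : ι → E) : (0:E) ∈ coneOf s a :=
  ⟨fun _ => 0, fun _ _ => le_refl _, by simp⟩

lemma coneOf_convex {ι : Type*} (s : Finset ι) (a : ι → E) : Convex ℝ (coneOf s a) := by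
  rintro x ⟨lx, hlx, rfl⟩ y ⟨ly, hly, rfl⟩ p q hp hq hpq
  refine ⟨fun i => p * lx i + q * ly i,
    fun i hi => by have := hlx i hi; have := hly i hi; positivity, ?_⟩
  rw [Finset.smul_sum, Finset.smul_sum, ← Finset.sum_add_distrib]
  exact Finset.sum_congr rfl fun i _ => by
    rw [add_smul, smul_smul, smul_smul]

lemma basic_closed {ι : Type*} (t : Finset ι) (a : ι → E)
    (hind : LinearIndependent ℝ (fun i : t => a i)) :
    IsClosed {x : E | ∃ mu : ι → ℝ, (∀ i ∈ t, 0 ≤ mu i) ∧ x = ∑ i ∈ t, mu i • a i} := by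
  classical
  obtain ⟨C, hC, hCb⟩ := indep_bound (fun i : t => a i) hind
  set g : ({ i // i ∈ t } → ℝ) →ₗ[ℝ] E :=
    { toFun := fun mu => ∑ i, mu i • a i
      map_add' := by intro x y; simp [add_smul, Finset.sum_add_distrib]
      map_smul' := by intro r x; simp [smul_smul, Finset.smul_sum] } with hgdef
  have hset : {x : E | ∃ mu : ι → ℝ, (∀ i ∈ t, 0 ≤ mu i) ∧ x = ∑ i ∈ t, mu i • a i}
      = g '' {mu | ∀ i, 0 ≤ mu i} := by
    ext x
    constructor
    · rintro ⟨mu, hmu, rfl⟩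
      refine ⟨fun i => mu i, fun i => hmu i i.2, ?_⟩
      show ∑ i : t, mu i • a i = ∑ i ∈ t, mu i • a i
      rw [← Finset.sum_attach t (fun i => mu i • a i)]
      rfl
    · rintro ⟨mu, hmu, rfl⟩
      refine ⟨fun i => if h : i ∈ t then mu ⟨i, h⟩ else 0, fun i hi => by simp only [dif_pos hi]; exact hmu _, ?_⟩
      show (∑ i : t, mu i • a i : E) = _
      rw [← Finset.sum_attach t (fun i => (if h : i ∈ t then mu ⟨i, h⟩ else 0) • a i)]
      exact Finset.sum_congr rfl fun i _ => by simp [i.2]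
  rw [hset]
  have hanti : AntilipschitzWith (⟨C, hC.le⟩ : NNReal) g := by
    apply AntilipschitzWith.of_le_mul_dist
    intro x y
    rw [dist_eq_norm, dist_eq_norm, ← map_sub]
    have h3 := hCb (x - y)
    have h4 : ‖x - y‖ ≤ ∑ i, |(x - y) i| := by
      apply pi_norm_le_iff_of_nonneg (Finset.sum_nonneg fun i _ => abs_nonneg _) |>.mpr
      intro i
      calc ‖(x - y) i‖ = |(x - y) i| := rfl
        _ ≤ ∑ j, |(x - y) j| := Finset.single_le_sum (f := fun j => |(x - y) j|) (fun j _ => abs_nonneg _) (Finset.mem_univ i)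
    calc ‖x - y‖ ≤ ∑ i, |(x - y) i| := h4
      _ ≤ C * ‖∑ i, (x - y) i • a i‖ := h3
      _ = (⟨C, hC.le⟩ : NNReal) * ‖g (x - y)‖ := rfl
  have hucont : UniformContinuous g := (LinearMap.toContinuousLinearMap g).uniformContinuous
  have hclosed : IsClosed {mu : {i // i ∈ t} → ℝ | ∀ i, 0 ≤ mu i} := by
    have : {mu : {i // i ∈ t} → ℝ | ∀ i, 0 ≤ mu i} = ⋂ i, {mu | 0 ≤ mu i} := by
      ext mu; simp [Set.mem_iInter]
    rw [this]
    exact isClosed_iInter fun i => isClosed_le continuous_const (continuous_apply i)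
  exact (hanti.isClosedEmbedding hucont).isClosedMap _ hclosed

lemma coneOf_closed {ι : Type*} [DecidableEq ι] (s : Finset ι) (a : ι → E) :
    IsClosed (coneOf s a) := by
  classical
  have hunion : coneOf s a = ⋃ t ∈ s.powerset.filter
      (fun t => LinearIndependent ℝ (fun i : {i // i ∈ t} => a i)),
      {x : E | ∃ mu : ι → ℝ, (∀ i ∈ t, 0 ≤ mu i) ∧ x = ∑ i ∈ t, mu i • a i} := by
    ext x
    simp only [Set.mem_iUnion, Finset.mem_filter, Finset.mem_powerset]
    constructor
    · rintro ⟨lam, hlam, rfl⟩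
      obtain ⟨t, hts, mu, hmu, hind, hsum⟩ := carath a s.card s rfl lam hlam
      exact ⟨t, ⟨hts, hind⟩, mu, hmu, hsum.symm⟩
    · rintro ⟨t, ⟨hts, _⟩, mu, hmu, rfl⟩
      refine ⟨fun i => if i ∈ t then mu i else 0, fun i hi => ?_, ?_⟩
      · dsimp only; split
        · exact hmu i ‹_›
        · exact le_refl 0
      · have h1 := Finset.sum_subset hts
          (f := fun i => (if i ∈ t then mu i else 0) • a i) (fun i his hit => by simp [hit])
        rw [← h1]
        exact Finset.sum_congr rfl fun i hi => by simp [hi]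
  rw [hunion]
  apply Set.Finite.isClosed_biUnion (Finset.finite_toSet _)
  intro t ht
  simp only [Finset.coe_filter, Set.mem_setOf_eq] at ht
  exact basic_closed t a ht.2

lemma farkas [CompleteSpace E] {ι : Type*} [DecidableEq ι] (a : ι → E) (s : Finset ι) (z : E)
    (hz : ∀ u : E, (∀ i ∈ s, ⟪a i, u⟫ ≤ 0) → ⟪z, u⟫ ≤ 0) :
    z ∈ coneOf s a := by
  obtain ⟨y, hy, hvar⟩ := exists_proj ⟨0, coneOf_zero s a⟩ (coneOf_closed s a)
    (coneOf_convex s a) z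
  -- u := z - y; show u = 0
  set u : E := z - y with hu
  have h2y : (2:ℝ) • y ∈ coneOf s a := by
    obtain ⟨lam, hlam, rfl⟩ := hy
    exact ⟨fun i => 2 * lam i, fun i hi => by have := hlam i hi; dsimp only; linarith,
      by rw [Finset.smul_sum]; exact Finset.sum_congr rfl fun i _ => by rw [smul_smul]⟩
  have huy : ⟪u, y⟫ = 0 := by
    have h1 := hvar 0 (coneOf_zero s a)
    have h2 := hvar ((2:ℝ) • y) h2y
    rw [zero_sub, inner_neg_right] at h1
    have h2' : ⟪u, (2:ℝ) • y - y⟫ = ⟪u, y⟫ := by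
      congr 1
      rw [two_smul]; abel
    rw [h2'] at h2
    linarith
  have hai : ∀ i ∈ s, ⟪a i, u⟫ ≤ 0 := by
    intro i hi
    have hmem : y + a i ∈ coneOf s a := by
      obtain ⟨lam, hlam, hyeq⟩ := hy
      refine ⟨fun j => lam j + if j = i then 1 else 0, fun j hj => by
        have := hlam j hj; dsimp only; split <;> linarith, ?_⟩
      have hsplit : ∑ j ∈ s, (lam j + if j = i then (1:ℝ) else 0) • a j
          = (∑ j ∈ s, lam j • a j) + ∑ j ∈ s, (if j = i then (1:ℝ) else 0) • a j := by
        rw [← Finset.sum_add_distrib]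
        exact Finset.sum_congr rfl fun j _ => add_smul _ _ _
      have hsingle : ∑ j ∈ s, (if j = i then (1:ℝ) else 0) • a j = a i := by
        have hcongr : ∀ j ∈ s, (if j = i then (1:ℝ) else 0) • a j = if j = i then a j else 0 :=
          fun j _ => by split <;> simp
        rw [Finset.sum_congr rfl hcongr, Finset.sum_ite_eq' s i a, if_pos hi]
      rw [hsplit, hsingle, hyeq]
    have := hvar (y + a i) hmem
    rw [add_sub_cancel_left] at this
    rw [real_inner_comm]
    exact this
  have hzu := hz u hai
  have : ⟪z, u⟫ = ‖u‖ ^ 2 + ⟪y, u⟫ := by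
    have : z = u + y := by rw [hu]; abel
    rw [this, inner_add_left, real_inner_self_eq_norm_sq]
  rw [this] at hzu
  rw [real_inner_comm] at huy
  have hu0 : ‖u‖ ^ 2 ≤ 0 := by rw [huy] at hzu; linarith
  have : u = 0 := by
    have := norm_nonneg u
    have h : ‖u‖ = 0 := by nlinarith
    exact norm_eq_zero.mp h
  have : z = y := by rw [← sub_eq_zero]; exact this
  rw [this]; exact hy

lemma hoffman [CompleteSpace E] {ι : Type*} [Fintype ι] [DecidableEq ι]
    (a : ι → E) (b : ι → ℝ) {S : Set E} (hS : S = {x | ∀ i, ⟪a i, x⟫ ≤ b i})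
    (hne : S.Nonempty) :
    ∃ C > 0, ∀ x, Metric.infDist x S ≤ C * Real.sqrt (∑ i, max (⟪a i, x⟫ - b i) 0 ^ 2) := by
  classical
  -- the constants
  set cst : Finset ι → ℝ := fun t =>
    if h : LinearIndependent ℝ (fun i : t => a i)
    then (indep_bound (fun i : t => a i) h).choose else 1 with hcst
  have hcstpos : ∀ t, 0 < cst t := by
    intro t
    rw [hcst]; dsimp only
    split
    · exact (indep_bound _ ‹_›).choose_spec.1
    · exact one_pos
  have hcstspec : ∀ (t : Finset ι) (h : LinearIndependent ℝ (fun i : t => a i))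
      (mu : t → ℝ), ∑ i, |mu i| ≤ cst t * ‖∑ i : t, mu i • a i‖ := by
    intro t h mu
    have : cst t = (indep_bound (fun i : t => a i) h).choose := by
      rw [hcst]; dsimp only; rw [dif_pos h]
    rw [this]
    exact (indep_bound (fun i : t => a i) h).choose_spec.2 mu
  set C : ℝ := Finset.univ.powerset.sup' ⟨∅, by simp⟩ cst with hC
  have hCpos : 0 < C := lt_of_lt_of_le (hcstpos ∅) (Finset.le_sup' cst (by simp))
  refine ⟨C, hCpos, fun x => ?_⟩
  -- closedness and convexity of S
  have hScl : IsClosed S := by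
    rw [hS]
    have : {x : E | ∀ i, ⟪a i, x⟫ ≤ b i} = ⋂ i, {x | ⟪a i, x⟫ ≤ b i} := by
      ext w; simp [Set.mem_iInter]
    rw [this]
    exact isClosed_iInter fun i =>
      isClosed_le (Continuous.inner continuous_const continuous_id) continuous_const
  have hSconv : Convex ℝ S := by
    rw [hS]
    intro w1 h1 w2 h2 p q hp hq hpq
    intro i
    have e1 := h1 i
    have e2 := h2 i
    calc ⟪a i, p • w1 + q • w2⟫ = p * ⟪a i, w1⟫ + q * ⟪a i, w2⟫ := by
          rw [inner_add_right, real_inner_smul_right, real_inner_smul_right]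
      _ ≤ p * b i + q * b i := by
          apply add_le_add
          · exact mul_le_mul_of_nonneg_left e1 hp
          · exact mul_le_mul_of_nonneg_left e2 hq
      _ = b i := by rw [← add_mul, hpq, one_mul]
  obtain ⟨y, hy, hvar⟩ := exists_proj hne hScl hSconv x
  set R : ℝ := Real.sqrt (∑ i, max (⟪a i, x⟫ - b i) 0 ^ 2) with hR
  have hR0 : 0 ≤ R := Real.sqrt_nonneg _
  have hRge : ∀ i, ⟪a i, x⟫ - b i ≤ R := by
    intro i
    have h1 : max (⟪a i, x⟫ - b i) 0 ≤ R := by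
      have hsq : (max (⟪a i, x⟫ - b i) 0) ^ 2 ≤ ∑ j, max (⟪a j, x⟫ - b j) 0 ^ 2 :=
        Finset.single_le_sum (f := fun j => max (⟪a j, x⟫ - b j) 0 ^ 2)
          (fun j _ => sq_nonneg _) (Finset.mem_univ i)
      calc max (⟪a i, x⟫ - b i) 0 = Real.sqrt ((max (⟪a i, x⟫ - b i) 0) ^ 2) :=
            (Real.sqrt_sq (le_max_right _ _)).symm
        _ ≤ R := by rw [hR]; exact Real.sqrt_le_sqrt hsq
    exact le_trans (le_max_left _ _) h1
  -- active set
  set J : Finset ι := Finset.univ.filter (fun i => ⟪a i, y⟫ = b i) with hJ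
  -- normal cone property
  have hnormal : ∀ u : E, (∀ i ∈ J, ⟪a i, u⟫ ≤ 0) → ⟪x - y, u⟫ ≤ 0 := by
    intro u hu
    set T : Finset ι := Finset.univ.filter (fun i => ⟪a i, y⟫ < b i) with hT
    set ε : ℝ := if h : T.Nonempty
      then min 1 (T.inf' h (fun i => (b i - ⟪a i, y⟫) / (1 + |⟪a i, u⟫|))) else 1 with hε
    have hεpos : 0 < ε := by
      rw [hε]
      split
      · apply lt_min one_pos
        rw [Finset.lt_inf'_iff]
        intro i hi
        have : ⟪a i, y⟫ < b i := (Finset.mem_filter.mp hi).2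
        have : 0 < 1 + |⟪a i, u⟫| := by positivity
        apply div_pos <;> linarith
      · exact one_pos
    have hmem : y + ε • u ∈ S := by
      rw [hS]
      intro i
      rw [inner_add_right, real_inner_smul_right]
      by_cases hact : ⟪a i, y⟫ = b i
      · have hiJ : i ∈ J := by rw [hJ]; simp [hact]
        have := hu i hiJ
        nlinarith
      · have hlt : ⟪a i, y⟫ < b i := by
          have : ⟪a i, y⟫ ≤ b i := by rw [hS] at hy; exact hy i
          exact lt_of_le_of_ne this hact
        have hiT : i ∈ T := by rw [hT]; simp [hlt]
        have hTne : T.Nonempty := ⟨i, hiT⟩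
        have hεle : ε ≤ (b i - ⟪a i, y⟫) / (1 + |⟪a i, u⟫|) := by
          rw [hε, dif_pos hTne]
          exact le_trans (min_le_right _ _) (Finset.inf'_le _ hiT)
        have habs : 0 < 1 + |⟪a i, u⟫| := by positivity
        rw [le_div_iff₀ habs] at hεle
        have h1 : ⟪a i, u⟫ ≤ |⟪a i, u⟫| := le_abs_self _
        nlinarith [abs_nonneg (⟪a i, u⟫)]
    have := hvar (y + ε • u) hmem
    rw [add_sub_cancel_left, real_inner_smul_right] at this
    nlinarith
  -- Farkas: x - y in cone of active constraints
  have hcone := farkas a J (x - y) hnormal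
  obtain ⟨lam, hlam, hxy⟩ := hcone
  obtain ⟨t, htJ, mu, hmu, hind, hsum⟩ := carath a J.card J rfl lam hlam
  rw [← hxy] at hsum
  -- key inequality
  have hkey : ‖x - y‖ ^ 2 ≤ (∑ i ∈ t, mu i) * R := by
    have h1 : ‖x - y‖ ^ 2 = ∑ i ∈ t, mu i * ⟪a i, x - y⟫ := by
      rw [← real_inner_self_eq_norm_sq, ← hsum, sum_inner]
      exact Finset.sum_congr rfl fun i _ => real_inner_smul_left _ _ _
    rw [h1]
    have h2 : ∀ i ∈ t, mu i * ⟪a i, x - y⟫ ≤ mu i * R := by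
      intro i hi
      apply mul_le_mul_of_nonneg_left _ (hmu i hi)
      have hiJ : i ∈ J := htJ hi
      have hact : ⟪a i, y⟫ = b i := (Finset.mem_filter.mp hiJ).2
      rw [inner_sub_right, hact]
      exact hRge i
    calc ∑ i ∈ t, mu i * ⟪a i, x - y⟫ ≤ ∑ i ∈ t, mu i * R := Finset.sum_le_sum h2
      _ = (∑ i ∈ t, mu i) * R := by rw [Finset.sum_mul]
  -- the coefficient bound
  have hcoef : ∑ i ∈ t, mu i ≤ C * ‖x - y‖ := by
    have h1 : ∑ i ∈ t, mu i = ∑ i : t, mu i := (Finset.sum_attach t mu).symm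
    have h2 : ∑ i : t, mu i ≤ ∑ i : t, |mu i| :=
      Finset.sum_le_sum fun i _ => le_abs_self _
    have h3 : ∑ i : t, |(fun i : t => mu i) i| ≤ cst t * ‖∑ i : t, (fun i : t => mu i) i • a i‖ :=
      hcstspec t hind _
    have h4 : (∑ i : t, mu i • a i : E) = x - y := by
      rw [← hsum, ← Finset.sum_attach t (fun i => mu i • a i)]
      rfl
    have h5 : cst t ≤ C := Finset.le_sup' cst (by simp)
    calc ∑ i ∈ t, mu i = ∑ i : t, mu i := h1
      _ ≤ ∑ i : t, |mu i| := h2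
      _ ≤ cst t * ‖∑ i : t, mu i • a i‖ := h3
      _ = cst t * ‖x - y‖ := by rw [h4]
      _ ≤ C * ‖x - y‖ := mul_le_mul_of_nonneg_right h5 (norm_nonneg _)
  -- conclude
  have hdist : Metric.infDist x S ≤ ‖x - y‖ := by
    have := Metric.infDist_le_dist_of_mem (x := x) hy
    rwa [dist_eq_norm] at this
  rcases eq_or_lt_of_le (norm_nonneg (x - y)) with h0 | h0
  · calc Metric.infDist x S ≤ ‖x - y‖ := hdist
      _ = 0 := h0.symm
      _ ≤ C * R := by positivity
  · have : ‖x - y‖ * ‖x - y‖ ≤ (C * ‖x - y‖) * R := by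
      have := hkey
      rw [pow_two] at this
      calc ‖x - y‖ * ‖x - y‖ ≤ (∑ i ∈ t, mu i) * R := by rw [← pow_two]; exact hkey
        _ ≤ (C * ‖x - y‖) * R := mul_le_mul_of_nonneg_right hcoef hR0
    have hxyR : ‖x - y‖ ≤ C * R := by
      have h' : ‖x - y‖ * ‖x - y‖ ≤ (C * R) * ‖x - y‖ := by ring_nf; ring_nf at this; linarith
      exact le_of_mul_le_mul_right (by linarith) h0
    exact hdist.trans hxyR

end Hoffman

lemma max_sq_add_max_neg_sq (s : ℝ) : max s 0 ^ 2 + max (-s) 0 ^ 2 = s ^ 2 := by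
  rcases le_total s 0 with h | h
  · rw [max_eq_right h, max_eq_left (neg_nonneg.mpr h)]; ring
  · rw [max_eq_left h, max_eq_right (neg_nonpos.mpr h)]; ring

/-- Hoffman-type error bound: a convex quadratic `f(w) = ½‖Bw - c‖²` over a
polyhedron `P`, with attained minimum, satisfies
`dist(w, argmin_P f) ≤ C (f(w) - min_P f)^{1/2}` for some `C > 0`. -/
theorem stmt_15 {d K m : ℕ} (B : Matrix (Fin d) (Fin K) ℝ) (c : Fin d → ℝ)
    (M : Matrix (Fin m) (Fin K) ℝ) (v : Fin m → ℝ)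
    (P : Set (EuclideanSpace ℝ (Fin K)))
    (hP : P = {w | ∀ i, ∑ k, M i k * w k ≤ v i})
    (f : EuclideanSpace ℝ (Fin K) → ℝ)
    (hf : ∀ w, f w = (1 / 2) * ∑ i, ((∑ k, B i k * w k) - c i) ^ 2)
    (wmin : EuclideanSpace ℝ (Fin K)) (hwmin : wmin ∈ P)
    (hmin : ∀ w ∈ P, f wmin ≤ f w) :
    ∃ C > 0, ∀ w ∈ P,
      Metric.infDist w {s ∈ P | ∀ w' ∈ P, f s ≤ f w'}
        ≤ C * (f w - f wmin) ^ ((1 : ℝ) / 2) := by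
  classical
  set p : Fin d → ℝ := fun i => ∑ k, B i k * wmin k with hp
  set qq : EuclideanSpace ℝ (Fin K) → Fin d → ℝ :=
    fun x i => (∑ k, B i k * x k) - p i with hqq
  set aM : Fin m → EuclideanSpace ℝ (Fin K) :=
    fun i => (WithLp.equiv 2 (Fin K → ℝ)).symm (fun k => M i k) with haM
  set aB : Fin d → EuclideanSpace ℝ (Fin K) :=
    fun i => (WithLp.equiv 2 (Fin K → ℝ)).symm (fun k => B i k) with haB
  set a : (Fin m ⊕ Fin d ⊕ Fin d) → EuclideanSpace ℝ (Fin K) :=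
    Sum.elim aM (Sum.elim aB (fun i => -aB i)) with ha
  set bv : (Fin m ⊕ Fin d ⊕ Fin d) → ℝ := Sum.elim v (Sum.elim p (fun i => -p i)) with hbv
  have hinnerM : ∀ i (w : EuclideanSpace ℝ (Fin K)), ⟪aM i, w⟫ = ∑ k, M i k * w k := by
    intro i w
    rw [haM]
    rw [PiLp.inner_apply]
    simp [RCLike.inner_apply, mul_comm]
  have hinnerB : ∀ i (w : EuclideanSpace ℝ (Fin K)), ⟪aB i, w⟫ = ∑ k, B i k * w k := by
    intro i w
    rw [haB]
    rw [PiLp.inner_apply]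
    simp [RCLike.inner_apply, mul_comm]
  set S' : Set (EuclideanSpace ℝ (Fin K)) := {x | ∀ i, ⟪a i, x⟫ ≤ bv i} with hS'
  -- membership characterization
  have hmem' : ∀ x, x ∈ S' ↔ (x ∈ P ∧ ∀ i, ∑ k, B i k * x k = p i) := by
    intro x
    constructor
    · intro hx
      refine ⟨?_, ?_⟩
      · rw [hP]
        intro i
        have := hx (Sum.inl i)
        rwa [ha, hbv, Sum.elim_inl, Sum.elim_inl, hinnerM] at this
      · intro i
        have h1 := hx (Sum.inr (Sum.inl i))
        have h2 := hx (Sum.inr (Sum.inr i))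
        rw [ha, hbv, Sum.elim_inr, Sum.elim_inr, Sum.elim_inl, Sum.elim_inl, hinnerB] at h1
        rw [ha, hbv, Sum.elim_inr, Sum.elim_inr, Sum.elim_inr, Sum.elim_inr,
          inner_neg_left, hinnerB] at h2
        have h2' : p i ≤ ∑ k, B i k * x k := by linarith
        exact le_antisymm h1 h2'
    · rintro ⟨hxP, hxB⟩ i
      rcases i with i | i | i
      · rw [ha, hbv, Sum.elim_inl, Sum.elim_inl, hinnerM]
        rw [hP] at hxP
        exact hxP i
      · rw [ha, hbv, Sum.elim_inr, Sum.elim_inr, Sum.elim_inl, Sum.elim_inl, hinnerB]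
        exact (hxB i).le
      · rw [ha, hbv, Sum.elim_inr, Sum.elim_inr, Sum.elim_inr, Sum.elim_inr,
          inner_neg_left, hinnerB]
        have := hxB i
        linarith
  have hwminS' : wmin ∈ S' := by
    rw [hmem']
    exact ⟨hwmin, fun i => rfl⟩
  -- f difference formula
  have hfw : f wmin = 1 / 2 * ∑ i, (p i - c i) ^ 2 := by rw [hf]
  have hfdiff : ∀ x, f x - f wmin
      = 1 / 2 * ∑ i, qq x i ^ 2 + ∑ i, qq x i * (p i - c i) := by
    intro x
    rw [hf, hfw]
    have hterm : ∀ i ∈ Finset.univ, ((∑ k, B i k * x k) - c i) ^ 2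
        = (qq x i ^ 2 + 2 * (qq x i * (p i - c i))) + (p i - c i) ^ 2 := by
      intro i _
      rw [hqq]; ring
    rw [Finset.sum_congr rfl hterm, Finset.sum_add_distrib, Finset.sum_add_distrib]
    have h2 : ∑ i, 2 * (qq x i * (p i - c i)) = 2 * ∑ i, qq x i * (p i - c i) := by
      rw [Finset.mul_sum]
    rw [h2]
    ring
  -- segment stays in P
  have hseg : ∀ x ∈ P, ∀ t : ℝ, 0 ≤ t → t ≤ 1 → wmin + t • (x - wmin) ∈ P := by
    intro x hx t ht0 ht1
    rw [hP]
    intro i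
    have hsum : ∑ k, M i k * ((wmin + t • (x - wmin)) k)
        = (∑ k, M i k * wmin k) + t * ((∑ k, M i k * x k) - ∑ k, M i k * wmin k) := by
      have : ∀ k ∈ Finset.univ, M i k * ((wmin + t • (x - wmin)) k)
          = M i k * wmin k + t * (M i k * x k - M i k * wmin k) := by
        intro k _
        have : (wmin + t • (x - wmin)) k = wmin k + t * (x k - wmin k) := by
          simp [PiLp.add_apply, PiLp.smul_apply, PiLp.sub_apply]
        rw [this]; ring
      rw [Finset.sum_congr rfl this, Finset.sum_add_distrib, ← Finset.mul_sum,
        Finset.sum_sub_distrib]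
    rw [hsum]
    rw [hP] at hx
    have h1 := hx i
    have h2 : ∑ k, M i k * wmin k ≤ v i := by rw [hP] at hwmin; exact hwmin i
    nlinarith
  -- B along segment
  have hqseg : ∀ (x : EuclideanSpace ℝ (Fin K)) (t : ℝ) i,
      qq (wmin + t • (x - wmin)) i = t * qq x i := by
    intro x t i
    rw [hqq]
    dsimp only
    have : ∀ k ∈ Finset.univ, B i k * ((wmin + t • (x - wmin)) k)
        = B i k * wmin k + t * (B i k * x k - B i k * wmin k) := by
      intro k _
      have : (wmin + t • (x - wmin)) k = wmin k + t * (x k - wmin k) := by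
        simp [PiLp.add_apply, PiLp.smul_apply, PiLp.sub_apply]
      rw [this]; ring
    rw [Finset.sum_congr rfl this, Finset.sum_add_distrib, ← Finset.mul_sum,
      Finset.sum_sub_distrib]
    rw [hp]
    ring
  -- first order optimality
  have hfoc : ∀ x ∈ P, 0 ≤ ∑ i, qq x i * (p i - c i) := by
    intro x hx
    by_contra hneg
    push_neg at hneg
    set g : ℝ := ∑ i, qq x i * (p i - c i) with hg
    set h : ℝ := ∑ i, qq x i ^ 2 with hh
    have hh0 : 0 ≤ h := Finset.sum_nonneg fun i _ => sq_nonneg _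
    set t : ℝ := min 1 ((-g) / (h + 1)) with htdef
    have ht0 : 0 < t := lt_min one_pos (div_pos (by linarith) (by linarith))
    have ht1 : t ≤ 1 := min_le_left _ _
    have hth : t * (h + 1) ≤ -g := by
      have := min_le_right 1 ((-g) / (h + 1))
      rw [htdef]
      rw [← le_div_iff₀ (by linarith : (0:ℝ) < h + 1)]
      exact this
    have hwt := hmin _ (hseg x hx t ht0.le ht1)
    have hft : f (wmin + t • (x - wmin)) - f wmin = 1 / 2 * (t ^ 2 * h) + t * g := by
      rw [hfdiff]
      have e1 : ∑ i, qq (wmin + t • (x - wmin)) i ^ 2 = t ^ 2 * h := by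
        rw [hh, Finset.mul_sum]
        exact Finset.sum_congr rfl fun i _ => by rw [hqseg]; ring
      have e2 : ∑ i, qq (wmin + t • (x - wmin)) i * (p i - c i) = t * g := by
        rw [hg, Finset.mul_sum]
        exact Finset.sum_congr rfl fun i _ => by rw [hqseg]; ring
      rw [e1, e2]
    nlinarith [mul_le_mul_of_nonneg_left hth ht0.le, sq_nonneg t, mul_pos ht0 ht0]
  -- growth condition
  have hgrow : ∀ x ∈ P, ∑ i, qq x i ^ 2 ≤ 2 * (f x - f wmin) := by
    intro x hx
    have h1 := hfdiff x
    have h2 := hfoc x hx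
    linarith
  -- argmin set equality
  have hSarg : {s ∈ P | ∀ w' ∈ P, f s ≤ f w'} = S' := by
    ext x
    simp only [Set.mem_setOf_eq, Set.mem_sep_iff]
    rw [hmem' x]
    constructor
    · rintro ⟨hxP, hxmin⟩
      refine ⟨hxP, fun i => ?_⟩
      have hfx : f x = f wmin := le_antisymm (hxmin wmin hwmin) (hmin x hxP)
      have hq2 : ∑ j, qq x j ^ 2 ≤ 0 := by
        have := hgrow x hxP
        rw [hfx] at this
        linarith
      have hq0 : ∑ j, qq x j ^ 2 = 0 :=
        le_antisymm hq2 (Finset.sum_nonneg fun j _ => sq_nonneg _)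
      have := (Finset.sum_eq_zero_iff_of_nonneg (fun j _ => sq_nonneg (qq x j))).mp hq0
        i (Finset.mem_univ i)
      have hqi : qq x i = 0 := by
        have := sq_eq_zero_iff.mp this
        exact this
      rw [hqq] at hqi
      dsimp only at hqi
      linarith
    · rintro ⟨hxP, hxB⟩
      refine ⟨hxP, fun w' hw' => ?_⟩
      have hfx : f x = f wmin := by
        rw [hf, hfw]
        congr 1
        exact Finset.sum_congr rfl fun i _ => by rw [hxB i]
      rw [hfx]
      exact hmin w' hw'
  -- apply hoffman
  obtain ⟨C, hC, hH⟩ := hoffman a bv hS' ⟨wmin, hwminS'⟩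
  refine ⟨C * Real.sqrt 2, by positivity, fun w hw => ?_⟩
  have h1 := hH w
  have hmaxsum : ∑ i : (Fin m ⊕ Fin d ⊕ Fin d), max (⟪a i, w⟫ - bv i) 0 ^ 2
      = ∑ i, qq w i ^ 2 := by
    rw [Fintype.sum_sum_type, Fintype.sum_sum_type]
    have hMpart : ∑ i : Fin m, max (⟪a (Sum.inl i), w⟫ - bv (Sum.inl i)) 0 ^ 2 = 0 := by
      apply Finset.sum_eq_zero
      intro i _
      rw [ha, hbv, Sum.elim_inl, Sum.elim_inl, hinnerM]
      rw [hP] at hw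
      have := hw i
      rw [max_eq_right (by linarith)]
      ring
    rw [hMpart, zero_add]
    have hB1 : ∀ i : Fin d, ⟪a (Sum.inr (Sum.inl i)), w⟫ - bv (Sum.inr (Sum.inl i)) = qq w i := by
      intro i
      rw [ha, hbv, Sum.elim_inr, Sum.elim_inr, Sum.elim_inl, Sum.elim_inl, hinnerB, hqq]
    have hB2 : ∀ i : Fin d, ⟪a (Sum.inr (Sum.inr i)), w⟫ - bv (Sum.inr (Sum.inr i)) = -qq w i := by
      intro i
      rw [ha, hbv, Sum.elim_inr, Sum.elim_inr, Sum.elim_inr, Sum.elim_inr,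
        inner_neg_left, hinnerB, hqq]
      ring
    rw [← Finset.sum_add_distrib]
    apply Finset.sum_congr rfl
    intro i _
    rw [hB1 i, hB2 i]
    exact max_sq_add_max_neg_sq _
  rw [hSarg]
  calc Metric.infDist w S' ≤ C * Real.sqrt (∑ i : (Fin m ⊕ Fin d ⊕ Fin d),
        max (⟪a i, w⟫ - bv i) 0 ^ 2) := h1
    _ = C * Real.sqrt (∑ i, qq w i ^ 2) := by rw [hmaxsum]
    _ ≤ C * Real.sqrt (2 * (f w - f wmin)) := by
        apply mul_le_mul_of_nonneg_left _ hC.le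
        exact Real.sqrt_le_sqrt (hgrow w hw)
    _ = C * (Real.sqrt 2 * Real.sqrt (f w - f wmin)) := by
        rw [Real.sqrt_mul (by norm_num : (0:ℝ) ≤ 2)]
    _ = (C * Real.sqrt 2) * (f w - f wmin) ^ ((1:ℝ) / 2) := by
        simp only [Real.sqrt_eq_rpow]
        ring
end

section
/- Consider the iterates of accelerated proximal gradient with inexact gradients as in Algorithm 2: given $E_s \geq 0$ with $\mathbb{E}[E_s^2] \leq (s+2)^{-4}$, step size $\eta > 0$, and the recursion $\frac{(s+1)(s+2)}{2}\delta_{s+1} \leq \frac{s(s+1)}{2}\delta_s + \frac{8}{\eta}(d_s - d_{s+1}) + 2(s+1)E_s + \frac{\eta(s+1)(s+2)}{4}E_s^2$, where $\delta_s, d_s \geq 0$ and $d_0 \leq 2$. Then $\mathbb{E}[\delta_S] \leq \frac{32}{\eta S(S+1)} + \frac{4\log(S) + 4}{S(S+1)} + \frac{\pi^2 \eta}{12\, S(S+1)}$ for all $S \geq 1$. -/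
open MeasureTheory
open scoped ProbabilityTheory

/-- `∑_{s<n} 1/((s+1)(s+2)) ≤ 1 - 1/(n+1)`. -/
lemma aux_sum_inv_mul (n : ℕ) :
    ∑ s ∈ Finset.range n, (1 : ℝ) / (((s : ℝ) + 1) * ((s : ℝ) + 2)) ≤ 1 - 1 / ((n : ℝ) + 1) := by
  induction n with
  | zero => simp
  | succ n ih =>
    rw [Finset.sum_range_succ]
    have h1 : (0 : ℝ) < (n : ℝ) + 1 := by positivity
    have h2 : (0 : ℝ) < (n : ℝ) + 2 := by positivity
    have hkey : (1 : ℝ) / (((n : ℝ) + 1) * ((n : ℝ) + 2)) = 1 / ((n : ℝ) + 1) - 1 / ((n : ℝ) + 2) := by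
      field_simp
      ring
    have hcast : ((n + 1 : ℕ) : ℝ) + 1 = (n : ℝ) + 2 := by push_cast; ring
    rw [hkey, hcast]
    linarith

/-- `∑_{s<n} 1/(s+2) ≤ log (n+1)`. -/
lemma aux_sum_inv_le_log (n : ℕ) :
    ∑ s ∈ Finset.range n, (1 : ℝ) / ((s : ℝ) + 2) ≤ Real.log ((n : ℝ) + 1) := by
  induction n with
  | zero => simp
  | succ n ih =>
    rw [Finset.sum_range_succ]
    have h1 : (0 : ℝ) < (n : ℝ) + 1 := by positivity
    have h2 : (0 : ℝ) < (n : ℝ) + 2 := by positivity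
    have hlog : Real.log (((n : ℝ) + 1) / ((n : ℝ) + 2)) ≤ ((n : ℝ) + 1) / ((n : ℝ) + 2) - 1 :=
      Real.log_le_sub_one_of_pos (by positivity)
    rw [Real.log_div (by positivity) (by positivity)] at hlog
    have heq : ((n : ℝ) + 1) / ((n : ℝ) + 2) - 1 = -(1 / ((n : ℝ) + 2)) := by
      field_simp
      norm_num
    rw [heq] at hlog
    have hcast : ((n + 1 : ℕ) : ℝ) + 1 = (n : ℝ) + 2 := by push_cast; ring
    rw [hcast]
    linarith

/-- Telescoping recursion of the inexact accelerated method: with gradient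
errors satisfying `𝔼[E_s²] ≤ (s+2)⁻⁴`, `d₀ ≤ 2`, and the per-step recursion,
the expected optimality gap obeys
`𝔼[δ_S] ≤ 32/(ηS(S+1)) + (4 log S + 4)/(S(S+1)) + π²η/(12 S(S+1))`. -/
theorem stmt_18 {Ω : Type*} [MeasureSpace Ω] [IsProbabilityMeasure (ℙ : Measure Ω)]
    (η : ℝ) (hη : 0 < η) (δ d E : ℕ → Ω → ℝ)
    (hδ0 : ∀ s ω, 0 ≤ δ s ω) (hd0 : ∀ s ω, 0 ≤ d s ω) (hE0 : ∀ s ω, 0 ≤ E s ω)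
    (hd2 : ∀ ω, d 0 ω ≤ 2)
    (hEi : ∀ s, Integrable (E s) ℙ)
    (hE2i : ∀ s, Integrable (fun ω => (E s ω) ^ 2) ℙ)
    (hδi : ∀ s, Integrable (δ s) ℙ) (hdi : ∀ s, Integrable (d s) ℙ)
    (hE2 : ∀ s : ℕ, (∫ ω, (E s ω) ^ 2 ∂ℙ) ≤ 1 / ((s : ℝ) + 2) ^ 4)
    (hrec : ∀ (s : ℕ) (ω : Ω),
      ((s : ℝ) + 1) * ((s : ℝ) + 2) / 2 * δ (s + 1) ω ≤
        (s : ℝ) * ((s : ℝ) + 1) / 2 * δ s ω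
        + 8 / η * (d s ω - d (s + 1) ω)
        + 2 * ((s : ℝ) + 1) * E s ω
        + η * ((s : ℝ) + 1) * ((s : ℝ) + 2) / 4 * (E s ω) ^ 2)
    (S : ℕ) (hS : 1 ≤ S) :
    (∫ ω : Ω, δ S ω ∂ℙ) ≤
      32 / (η * S * (S + 1)) + (4 * Real.log S + 4) / (S * (S + 1))
        + Real.pi ^ 2 * η / (12 * S * (S + 1)) := by
  set Dδ : ℕ → ℝ := fun s => ∫ ω, δ s ω ∂ℙ with hDδ
  set Dd : ℕ → ℝ := fun s => ∫ ω, d s ω ∂ℙ with hDd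
  set DE : ℕ → ℝ := fun s => ∫ ω, E s ω ∂ℙ with hDE
  set DE2 : ℕ → ℝ := fun s => ∫ ω, (E s ω) ^ 2 ∂ℙ with hDE2
  have hDδ0 : ∀ s, 0 ≤ Dδ s := fun s => integral_nonneg (fun ω => hδ0 s ω)
  have hDd0 : ∀ s, 0 ≤ Dd s := fun s => integral_nonneg (fun ω => hd0 s ω)
  have hDE0 : ∀ s, 0 ≤ DE s := fun s => integral_nonneg (fun ω => hE0 s ω)
  have hDd2 : Dd 0 ≤ 2 := by
    calc Dd 0 ≤ ∫ _ : Ω, (2 : ℝ) ∂ℙ := integral_mono (hdi 0) (integrable_const 2) hd2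
    _ = 2 := by simp
  -- Jensen: (∫ E)² ≤ ∫ E²
  have hDEsq : ∀ s, (DE s) ^ 2 ≤ DE2 s := by
    intro s
    have hmem : MemLp (E s) 2 ℙ :=
      (memLp_two_iff_integrable_sq (hEi s).aestronglyMeasurable).2 (hE2i s)
    have hv := ProbabilityTheory.variance_nonneg (E s) ℙ
    rw [ProbabilityTheory.variance_eq_sub hmem] at hv
    simp only [Pi.pow_apply] at hv ⊢
    linarith [hv]
  have hDEle : ∀ s : ℕ, DE s ≤ 1 / ((s : ℝ) + 2) ^ 2 := by
    intro s
    have hb : (0 : ℝ) ≤ 1 / ((s : ℝ) + 2) ^ 2 := by positivity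
    have h3 : (1 / ((s : ℝ) + 2) ^ 4) = (1 / ((s : ℝ) + 2) ^ 2) ^ 2 := by
      rw [div_pow, one_pow, ← pow_mul]
    have h4 : (DE s) ^ 2 ≤ (1 / ((s : ℝ) + 2) ^ 2) ^ 2 := by
      rw [← h3]; exact le_trans (hDEsq s) (hE2 s)
    have h5 := Real.sqrt_le_sqrt h4
    rwa [Real.sqrt_sq (hDE0 s), Real.sqrt_sq hb] at h5
  -- expectation of the recursion
  have hrecE : ∀ s : ℕ,
      ((s : ℝ) + 1) * ((s : ℝ) + 2) / 2 * Dδ (s + 1) ≤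
        (s : ℝ) * ((s : ℝ) + 1) / 2 * Dδ s + 8 / η * (Dd s - Dd (s + 1))
          + 2 * ((s : ℝ) + 1) * DE s + η * ((s : ℝ) + 1) * ((s : ℝ) + 2) / 4 * DE2 s := by
    intro s
    have i1 : Integrable (fun ω => (s : ℝ) * ((s : ℝ) + 1) / 2 * δ s ω) ℙ :=
      (hδi s).const_mul _
    have isub : Integrable (fun ω => d s ω - d (s + 1) ω) ℙ := (hdi s).sub (hdi (s + 1))
    have i2 : Integrable (fun ω => 8 / η * (d s ω - d (s + 1) ω)) ℙ := isub.const_mul _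
    have i3 : Integrable (fun ω => 2 * ((s : ℝ) + 1) * E s ω) ℙ := (hEi s).const_mul _
    have i4 : Integrable (fun ω => η * ((s : ℝ) + 1) * ((s : ℝ) + 2) / 4 * (E s ω) ^ 2) ℙ :=
      (hE2i s).const_mul _
    have i12 : Integrable (fun ω => (s : ℝ) * ((s : ℝ) + 1) / 2 * δ s ω
        + 8 / η * (d s ω - d (s + 1) ω)) ℙ := i1.add i2
    have i123 : Integrable (fun ω => (s : ℝ) * ((s : ℝ) + 1) / 2 * δ s ω
        + 8 / η * (d s ω - d (s + 1) ω) + 2 * ((s : ℝ) + 1) * E s ω) ℙ := i12.add i3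
    have hL : Integrable (fun ω => ((s : ℝ) + 1) * ((s : ℝ) + 2) / 2 * δ (s + 1) ω) ℙ :=
      (hδi (s + 1)).const_mul _
    have hR : Integrable (fun ω => (s : ℝ) * ((s : ℝ) + 1) / 2 * δ s ω
        + 8 / η * (d s ω - d (s + 1) ω) + 2 * ((s : ℝ) + 1) * E s ω
        + η * ((s : ℝ) + 1) * ((s : ℝ) + 2) / 4 * (E s ω) ^ 2) ℙ := i123.add i4
    have hmono := integral_mono hL hR (fun ω => hrec s ω)
    rw [integral_const_mul] at hmono
    rw [integral_add i123 i4, integral_add i12 i3, integral_add i1 i2,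
      integral_const_mul, integral_const_mul, integral_const_mul, integral_const_mul,
      integral_sub (hdi s) (hdi (s + 1))] at hmono
    exact hmono
  -- telescoping
  have htel : ∀ n : ℕ,
      (n : ℝ) * ((n : ℝ) + 1) / 2 * Dδ n + 8 / η * Dd n ≤ 8 / η * Dd 0
        + ∑ s ∈ Finset.range n,
            (2 * ((s : ℝ) + 1) * DE s + η * ((s : ℝ) + 1) * ((s : ℝ) + 2) / 4 * DE2 s) := by
    intro n
    induction n with
    | zero => simp
    | succ n ih =>
      rw [Finset.sum_range_succ]
      have h := hrecE n
      push_cast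
      push_cast at ih
      linarith
  -- bound the summands
  have hub : ∀ s : ℕ,
      2 * ((s : ℝ) + 1) * DE s + η * ((s : ℝ) + 1) * ((s : ℝ) + 2) / 4 * DE2 s
        ≤ 2 * (1 / ((s : ℝ) + 2)) + η / 4 * (1 / (((s : ℝ) + 1) * ((s : ℝ) + 2))) := by
    intro s
    have h1 : (0 : ℝ) < (s : ℝ) + 1 := by positivity
    have h2 : (0 : ℝ) < (s : ℝ) + 2 := by positivity
    have key1 : ((s : ℝ) + 1) * (1 / ((s : ℝ) + 2) ^ 2) ≤ 1 / ((s : ℝ) + 2) := by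
      rw [mul_one_div, div_le_div_iff₀ (by positivity) (by positivity)]
      nlinarith
    have key2 : ((s : ℝ) + 1) * ((s : ℝ) + 2) * (1 / ((s : ℝ) + 2) ^ 4)
        ≤ 1 / (((s : ℝ) + 1) * ((s : ℝ) + 2)) := by
      rw [mul_one_div, div_le_div_iff₀ (by positivity) (by positivity)]
      nlinarith
    have hA : 2 * ((s : ℝ) + 1) * DE s ≤ 2 * (1 / ((s : ℝ) + 2)) :=
      calc 2 * ((s : ℝ) + 1) * DE s ≤ 2 * ((s : ℝ) + 1) * (1 / ((s : ℝ) + 2) ^ 2) :=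
            mul_le_mul_of_nonneg_left (hDEle s) (by positivity)
      _ = 2 * (((s : ℝ) + 1) * (1 / ((s : ℝ) + 2) ^ 2)) := by ring
      _ ≤ 2 * (1 / ((s : ℝ) + 2)) := by linarith
    have hB : η * ((s : ℝ) + 1) * ((s : ℝ) + 2) / 4 * DE2 s
        ≤ η / 4 * (1 / (((s : ℝ) + 1) * ((s : ℝ) + 2))) :=
      calc η * ((s : ℝ) + 1) * ((s : ℝ) + 2) / 4 * DE2 s
          ≤ η * ((s : ℝ) + 1) * ((s : ℝ) + 2) / 4 * (1 / ((s : ℝ) + 2) ^ 4) :=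
            mul_le_mul_of_nonneg_left (hE2 s) (by positivity)
      _ = η / 4 * (((s : ℝ) + 1) * ((s : ℝ) + 2) * (1 / ((s : ℝ) + 2) ^ 4)) := by ring
      _ ≤ η / 4 * (1 / (((s : ℝ) + 1) * ((s : ℝ) + 2))) :=
            mul_le_mul_of_nonneg_left key2 (by positivity)
    linarith
  have hsum : ∑ s ∈ Finset.range S,
        (2 * ((s : ℝ) + 1) * DE s + η * ((s : ℝ) + 1) * ((s : ℝ) + 2) / 4 * DE2 s)
      ≤ 2 * Real.log ((S : ℝ) + 1) + η / 4 := by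
    have hSpos : (0 : ℝ) < (S : ℝ) + 1 := by positivity
    calc ∑ s ∈ Finset.range S,
          (2 * ((s : ℝ) + 1) * DE s + η * ((s : ℝ) + 1) * ((s : ℝ) + 2) / 4 * DE2 s)
        ≤ ∑ s ∈ Finset.range S, (2 * (1 / ((s : ℝ) + 2))
            + η / 4 * (1 / (((s : ℝ) + 1) * ((s : ℝ) + 2)))) :=
          Finset.sum_le_sum fun s _ => hub s
    _ = 2 * ∑ s ∈ Finset.range S, (1 : ℝ) / ((s : ℝ) + 2)
          + η / 4 * ∑ s ∈ Finset.range S, (1 : ℝ) / (((s : ℝ) + 1) * ((s : ℝ) + 2)) := by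
          rw [Finset.sum_add_distrib, Finset.mul_sum, Finset.mul_sum]
    _ ≤ 2 * Real.log ((S : ℝ) + 1) + η / 4 * 1 := by
          gcongr
          · exact aux_sum_inv_le_log S
          · linarith [aux_sum_inv_mul S, one_div_pos.2 hSpos]
    _ = 2 * Real.log ((S : ℝ) + 1) + η / 4 := by ring
  -- put it together
  have hS1 : (1 : ℝ) ≤ (S : ℝ) := by exact_mod_cast hS
  have hP : (0 : ℝ) < (S : ℝ) * ((S : ℝ) + 1) := by nlinarith
  have hη8 : (0 : ℝ) < 8 / η := div_pos (by norm_num) hη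
  have hd0le : 8 / η * Dd 0 ≤ 16 / η := by
    have h := mul_le_mul_of_nonneg_left hDd2 hη8.le
    have he : 8 / η * 2 = 16 / η := by ring
    linarith [he ▸ h]
  have hlog : Real.log ((S : ℝ) + 1) ≤ Real.log (S : ℝ) + 1 := by
    have hpos : (0 : ℝ) < (S : ℝ) := by linarith
    have h := Real.log_le_sub_one_of_pos (show (0:ℝ) < ((S : ℝ) + 1) / (S : ℝ) by positivity)
    rw [Real.log_div (by positivity) (by positivity)] at h
    have he : ((S : ℝ) + 1) / (S : ℝ) - 1 = 1 / (S : ℝ) := by field_simp; ring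
    rw [he] at h
    have h1 : (1 : ℝ) / (S : ℝ) ≤ 1 := by
      rw [div_le_one hpos]; exact hS1
    linarith
  have hmain : (S : ℝ) * ((S : ℝ) + 1) / 2 * Dδ S
      ≤ 16 / η + 2 * Real.log (S : ℝ) + 2 + η / 4 := by
    have h1 := htel S
    have h2 : 0 ≤ 8 / η * Dd S := mul_nonneg hη8.le (hDd0 S)
    linarith
  have hpi : (9 : ℝ) ≤ Real.pi ^ 2 := by
    nlinarith [Real.pi_gt_three]
  have hπη : η / 2 ≤ Real.pi ^ 2 * η / 12 := by nlinarith [hη.le]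
  -- final arithmetic
  have hgoal : Dδ S ≤ (32 / η + 4 * Real.log (S : ℝ) + 4 + Real.pi ^ 2 * η / 12)
      / ((S : ℝ) * ((S : ℝ) + 1)) := by
    rw [le_div_iff₀ hP, show (32:ℝ)/η = 2*(16/η) from by ring]
    linarith [hmain, hπη]
  have hrw : (32 / η + 4 * Real.log (S : ℝ) + 4 + Real.pi ^ 2 * η / 12)
      / ((S : ℝ) * ((S : ℝ) + 1))
      = 32 / (η * (S : ℝ) * ((S : ℝ) + 1)) + (4 * Real.log (S : ℝ) + 4) / ((S : ℝ) * ((S : ℝ) + 1))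
        + Real.pi ^ 2 * η / (12 * (S : ℝ) * ((S : ℝ) + 1)) := by
    field_simp
    ring
  calc Dδ S ≤ _ := hgoal
  _ = _ := hrw
end
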